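/- Suppose δ > d ≥ 1 and γ > 0, and set α₀ = γ/(δ−d). Then the set I_f = { l > 0 : γ + l d ≥ i + l j and γ + l d ≥ l δ for all (i,j) with b_{ij} ≠ 0 } equals the closed interval [ max_{j < d, b_{ij} ≠ 0} (i − γ)/(d − j), α₀ ], where (γ,d) = (n₁,m₁) is the vertex of the Newton polygon of q with largest y-coordinate, and in particular min I_f = l₁ = (n₂−n₁)/(m₁−m₂) provided the Newton polygon has at least two vertices. -/

import Mathlib

open Set

noncomputable section

/-- The quadrant `D(i,j) = {(x,y) : x ≤ i, y ≤ j}`. -/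
def quadrant (i j : ℕ) : Set (ℝ × ℝ) := {p | p.1 ≤ (i : ℝ) ∧ p.2 ≤ (j : ℝ)}

/-- The Newton polygon of `q = Σ b_{ij} z^i w^j`: the convex hull of the union of
the quadrants `D(i,j)` over all `(i,j)` with `b_{ij} ≠ 0`. -/
def newtonPolygon (b : ℕ → ℕ → ℂ) : Set (ℝ × ℝ) :=
  convexHull ℝ (⋃ (i : ℕ) (j : ℕ) (_ : b i j ≠ 0), quadrant i j)

/-- `n, m : ℕ → ℕ` (on indices `1,…,s`) enumerate the vertices of the Newton polygon
of `q`, with `n 1 < … < n s` and `m 1 > … > m s`. -/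
def IsNewtonVertexData (b : ℕ → ℕ → ℂ) (s : ℕ) (n m : ℕ → ℕ) : Prop :=
  1 ≤ s ∧
  StrictMonoOn n (Set.Icc 1 s) ∧
  StrictAntiOn m (Set.Icc 1 s) ∧
  Set.extremePoints ℝ (newtonPolygon b) =
    (fun k => ((n k : ℝ), (m k : ℝ))) '' (Set.Icc 1 s)

lemma mem_polygon_of_le {b : ℕ → ℕ → ℂ} {i j : ℕ} (hb : b i j ≠ 0) {p : ℝ × ℝ}
    (h1 : p.1 ≤ (i : ℝ)) (h2 : p.2 ≤ (j : ℝ)) : p ∈ newtonPolygon b :=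
  subset_convexHull ℝ _ (mem_iUnion.2 ⟨i, mem_iUnion.2 ⟨j, mem_iUnion.2 ⟨hb, ⟨h1, h2⟩⟩⟩⟩)

lemma convex_newtonPolygon (b : ℕ → ℕ → ℂ) : Convex ℝ (newtonPolygon b) :=
  convex_convexHull ℝ _

lemma extreme_no_seg {A : Set (ℝ × ℝ)} {p a c : ℝ × ℝ} (hp : p ∈ Set.extremePoints ℝ A)
    (haA : a ∈ A) (hcA : c ∈ A) (hseg : p ∈ openSegment ℝ a c) (hne : a ≠ p) : False :=
  hne (hp.2 haA hcA hseg)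

lemma mem_openSegment_of {a p c : ℝ × ℝ} {t : ℝ} (ht0 : 0 < t) (ht1 : t < 1)
    (h : p = (1 - t) • a + t • c) : p ∈ openSegment ℝ a c := by
  rw [openSegment_eq_image]
  exact ⟨t, ⟨ht0, ht1⟩, h.symm⟩

lemma mem_openSegment_vert {x y y1 y2 : ℝ} (h1 : y1 < y) (h2 : y < y2) :
    ((x, y) : ℝ × ℝ) ∈ openSegment ℝ (x, y1) (x, y2) := by
  have hd : 0 < y2 - y1 := by linarith
  have ht0 : 0 < (y - y1) / (y2 - y1) := div_pos (by linarith) hd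
  refine mem_openSegment_of ht0 ((div_lt_one hd).2 (by linarith)) ?_
  have key : (y - y1) / (y2 - y1) * (y2 - y1) = y - y1 := div_mul_cancel₀ _ hd.ne'
  have : (1 - (y - y1) / (y2 - y1)) * y1 + (y - y1) / (y2 - y1) * y2 = y := by nlinarith [key]
  ext
  · simp; ring
  · simpa using this.symm

lemma mem_openSegment_horiz {y x x1 x2 : ℝ} (h1 : x1 < x) (h2 : x < x2) :
    ((x, y) : ℝ × ℝ) ∈ openSegment ℝ (x1, y) (x2, y) := by
  have hd : 0 < x2 - x1 := by linarith
  have ht0 : 0 < (x - x1) / (x2 - x1) := div_pos (by linarith) hd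
  refine mem_openSegment_of ht0 ((div_lt_one hd).2 (by linarith)) ?_
  have key : (x - x1) / (x2 - x1) * (x2 - x1) = x - x1 := div_mul_cancel₀ _ hd.ne'
  have : (1 - (x - x1) / (x2 - x1)) * x1 + (x - x1) / (x2 - x1) * x2 = x := by nlinarith [key]
  ext
  · simpa using this.symm
  · simp; ring

lemma vertex_extreme {b : ℕ → ℕ → ℂ} {s : ℕ} {n m : ℕ → ℕ}
    (h : IsNewtonVertexData b s n m) {k : ℕ} (hk : k ∈ Set.Icc 1 s) :
    ((n k : ℝ), (m k : ℝ)) ∈ Set.extremePoints ℝ (newtonPolygon b) := by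
  rw [h.2.2.2]; exact ⟨k, hk, rfl⟩

lemma vertex_corner {b : ℕ → ℕ → ℂ} {s : ℕ} {n m : ℕ → ℕ}
    (h : IsNewtonVertexData b s n m) {k : ℕ} (hk : k ∈ Set.Icc 1 s) :
    b (n k) (m k) ≠ 0 := by
  have hE := vertex_extreme h hk
  have hU : ((n k : ℝ), (m k : ℝ)) ∈ ⋃ (i : ℕ) (j : ℕ) (_ : b i j ≠ 0), quadrant i j :=
    extremePoints_convexHull_subset hE
  simp only [mem_iUnion] at hU
  obtain ⟨i, j, hb, hx, hy⟩ := hU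
  simp only [quadrant] at hx hy
  have hxi : ((n k : ℝ)) = (i : ℝ) := by
    by_contra hne
    have hlt : (n k : ℝ) < i := lt_of_le_of_ne hx hne
    exact extreme_no_seg hE
      (mem_polygon_of_le hb (show (n k:ℝ) - 1 ≤ (i:ℝ) by linarith) (show (m k:ℝ) ≤ (j:ℝ) from hy))
      (mem_polygon_of_le hb (le_refl _) (show (m k:ℝ) ≤ (j:ℝ) from hy))
      (mem_openSegment_horiz (by linarith : (n k : ℝ) - 1 < (n k : ℝ)) hlt)
      (by simp [Prod.ext_iff])
  have hyj : ((m k : ℝ)) = (j : ℝ) := by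
    by_contra hne
    have hlt : (m k : ℝ) < j := lt_of_le_of_ne hy hne
    exact extreme_no_seg hE
      (mem_polygon_of_le hb (show (n k:ℝ) ≤ (i:ℝ) from hx) (show (m k:ℝ) - 1 ≤ (j:ℝ) by linarith))
      (mem_polygon_of_le hb (show (n k:ℝ) ≤ (i:ℝ) from hx) (le_refl _))
      (mem_openSegment_vert (by linarith : (m k : ℝ) - 1 < (m k : ℝ)) hlt)
      (by simp [Prod.ext_iff])
  have : n k = i := Nat.cast_injective hxi
  have h2 : m k = j := Nat.cast_injective hyj
  rw [this, h2]; exact hb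

lemma corner_i_bound {b : ℕ → ℕ → ℂ} {s : ℕ} {n m : ℕ → ℕ}
    (h : IsNewtonVertexData b s n m) (hs : 2 ≤ s) :
    ∀ i j : ℕ, b i j ≠ 0 → i ≤ n 1 + (n 2 - n 1) * m 1 := by
  have h1s : (1:ℕ) ∈ Set.Icc 1 s := ⟨le_refl 1, le_trans (by norm_num) hs⟩
  have h2s : (2:ℕ) ∈ Set.Icc 1 s := ⟨by norm_num, hs⟩
  have hn12 : n 1 < n 2 := h.2.1 h1s h2s (by norm_num)
  have hm21 : m 2 < m 1 := h.2.2.1 h1s h2s (by norm_num)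
  have hb1 := vertex_corner h h1s
  have hb2 := vertex_corner h h2s
  intro i j hb
  by_contra hgt
  push_neg at hgt
  have hIr : (n 1:ℝ) + ((n 2:ℝ) - n 1) * m 1 < i := by
    have h' := (Nat.cast_lt (α := ℝ)).2 hgt
    rw [Nat.cast_add, Nat.cast_mul, Nat.cast_sub hn12.le] at h'
    exact h'
  have hm1pos : (1:ℝ) ≤ (m 1:ℝ) := by
    have : 1 ≤ m 1 := Nat.one_le_iff_ne_zero.2 (by omega)
    exact_mod_cast this
  have hm2le : (m 2:ℝ) ≤ (m 1:ℝ) - 1 := by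
    have : m 2 + 1 ≤ m 1 := hm21
    have := (Nat.cast_le (α := ℝ)).2 this
    push_cast at this; linarith
  have hn21 : (0:ℝ) < (n 2:ℝ) - n 1 := by
    have := (Nat.cast_lt (α := ℝ)).2 hn12; linarith
  have hin1 : (0:ℝ) < (i:ℝ) - n 1 := by nlinarith
  set t := ((n 2:ℝ) - n 1)/((i:ℝ) - n 1) with hts
  have ht0 : 0 < t := div_pos hn21 hin1
  have ht1 : t < 1 := (div_lt_one hin1).2 (by nlinarith)
  have htmul : t * ((i:ℝ) - n 1) = (n 2:ℝ) - n 1 := div_mul_cancel₀ _ hin1.ne'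
  have htm1 : t * (m 1:ℝ) < 1 := by
    have hlt : ((n 2:ℝ) - n 1) * m 1 < (i:ℝ) - n 1 := by linarith
    have h1 : t * (((n 2:ℝ) - n 1) * m 1) < t * ((i:ℝ) - n 1) :=
      mul_lt_mul_of_pos_left hlt ht0
    rw [htmul] at h1
    nlinarith
  set a : ℝ×ℝ := (1 - t) • (((n 1:ℝ), (m 1:ℝ)) : ℝ×ℝ) + t • (((i:ℝ), (j:ℝ)) : ℝ×ℝ) with has
  have ha1 : a.1 = (n 2:ℝ) := by
    have e : a.1 = (1-t)*(n 1:ℝ) + t*i := rfl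
    rw [e]; nlinarith [htmul]
  have ha2 : a.2 = (1-t)*(m 1:ℝ) + t*j := rfl
  have ham2 : (m 2:ℝ) < a.2 := by
    rw [ha2]
    rcases le_or_gt (m 1:ℝ) (j:ℝ) with hj | hj
    · nlinarith
    · have hj0 : (0:ℝ) ≤ (j:ℝ) := Nat.cast_nonneg j
      nlinarith
  have haP : a ∈ newtonPolygon b := by
    apply (convex_newtonPolygon b).segment_subset
      (mem_polygon_of_le (p := ((n 1:ℝ), (m 1:ℝ))) hb1 le_rfl le_rfl)
      (mem_polygon_of_le (p := ((i:ℝ), (j:ℝ))) hb le_rfl le_rfl)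
    exact ⟨1 - t, t, by linarith, ht0.le, by ring, rfl⟩
  have hE2 := vertex_extreme h h2s
  have hane : a = ((n 2:ℝ), a.2) := Prod.ext ha1 rfl
  exact extreme_no_seg hE2
    (mem_polygon_of_le hb2 le_rfl (show (m 2:ℝ) - 1 ≤ (m 2:ℝ) by linarith))
    (hane ▸ haP)
    (mem_openSegment_vert (by linarith) ham2)
    (by simp [Prod.ext_iff])

lemma combo_le {a c X Y M : ℝ} (ha : 0 ≤ a) (hc : 0 ≤ c) (hac : a + c = 1)
    (hX : X ≤ M) (hY : Y ≤ M) :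
    a*X + c*Y ≤ M ∧ (a*X + c*Y = M → (0 < a → X = M) ∧ (0 < c → Y = M)) := by
  have hm : a*M + c*M = M := by rw [← add_mul, hac, one_mul]
  have h1 : 0 ≤ a*(M - X) := mul_nonneg ha (by linarith)
  have h2 : 0 ≤ c*(M - Y) := mul_nonneg hc (by linarith)
  have hsum : a*(M - X) + c*(M - Y) = M - (a*X + c*Y) := by
    rw [mul_sub, mul_sub]; linarith
  constructor
  · linarith
  · intro he
    have hz1 : a*(M - X) = 0 := by linarith
    have hz2 : c*(M - Y) = 0 := by linarith
    constructor
    · intro ha0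
      rcases mul_eq_zero.1 hz1 with h | h
      · exact absurd h ha0.ne'
      · linarith
    · intro hc0
      rcases mul_eq_zero.1 hz2 with h | h
      · exact absurd h hc0.ne'
      · linarith

lemma extreme_of_lexmax (b : ℕ → ℕ → ℂ) (α β : ℝ) (hα : 0 < α) (hβ : 0 < β) (i₀ j₀ : ℕ)
    (hb : b i₀ j₀ ≠ 0)
    (hmax : ∀ i j : ℕ, b i j ≠ 0 → α*i + β*j ≤ α*i₀ + β*j₀)
    (hlex : ∀ i j : ℕ, b i j ≠ 0 → α*i + β*j = α*i₀ + β*j₀ →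
      (j:ℝ) ≤ (j₀:ℝ) ∧ ((j:ℝ) = (j₀:ℝ) → (i:ℝ) = (i₀:ℝ))) :
    ((i₀:ℝ), (j₀:ℝ)) ∈ Set.extremePoints ℝ (newtonPolygon b) := by
  set M : ℝ := α*i₀ + β*j₀ with hM
  set v : ℝ×ℝ := ((i₀:ℝ), (j₀:ℝ)) with hv
  set S : Set (ℝ×ℝ) :=
    {p | α*p.1 + β*p.2 ≤ M ∧ (α*p.1 + β*p.2 = M → p.2 ≤ (j₀:ℝ) ∧ (p.2 = (j₀:ℝ) → p = v))}
    with hS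
  have hUS : (⋃ (i:ℕ) (j:ℕ) (_ : b i j ≠ 0), quadrant i j) ⊆ S := by
    rintro p hp
    simp only [mem_iUnion] at hp
    obtain ⟨i, j, hbij, hp1, hp2⟩ := hp
    have h2 := hmax i j hbij
    refine ⟨by nlinarith, fun he => ?_⟩
    have hpi : p.1 = (i:ℝ) := by nlinarith
    have hpj : p.2 = (j:ℝ) := by nlinarith
    have heq : α*(i:ℝ) + β*(j:ℝ) = M := by rw [← hpi, ← hpj]; exact he
    obtain ⟨hj, hi⟩ := hlex i j hbij heq
    refine ⟨by rw [hpj]; exact hj, fun hj' => ?_⟩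
    have hjj : (j:ℝ) = (j₀:ℝ) := by rw [← hpj]; exact hj'
    have hii := hi hjj
    have hpe : p = ((i:ℝ), (j:ℝ)) := Prod.ext hpi hpj
    rw [hpe, hv, hii, hjj]
  have hconv : Convex ℝ S := by
    rintro p ⟨hp1, hp2⟩ q ⟨hq1, hq2⟩ a c ha hc hac
    rcases eq_or_lt_of_le ha with ha0 | ha0
    · have hr : a • p + c • q = q := by
        rw [← ha0]; have hc1 : c = 1 := by linarith
        rw [hc1]; simp
      rw [hr]; exact ⟨hq1, hq2⟩
    rcases eq_or_lt_of_le hc with hc0 | hc0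
    · have hr : a • p + c • q = p := by
        rw [← hc0]; have ha1 : a = 1 := by linarith
        rw [ha1]; simp
      rw [hr]; exact ⟨hp1, hp2⟩
    have e1 : (a • p + c • q).1 = a * p.1 + c * q.1 := rfl
    have e2 : (a • p + c • q).2 = a * p.2 + c * q.2 := rfl
    have ef : α*(a • p + c • q).1 + β*(a • p + c • q).2
        = a*(α*p.1 + β*p.2) + c*(α*q.1 + β*q.2) := by rw [e1, e2]; ring
    obtain ⟨hle, heq⟩ := combo_le ha hc hac hp1 hq1
    rw [hS]
    refine ⟨by rw [ef]; exact hle, fun he => ?_⟩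
    rw [ef] at he
    obtain ⟨hXp, hXq⟩ := heq he
    have hfp := hXp ha0
    have hfq := hXq hc0
    obtain ⟨hpj, hpv⟩ := hp2 hfp
    obtain ⟨hqj, hqv⟩ := hq2 hfq
    obtain ⟨hle2, heq2⟩ := combo_le ha hc hac hpj hqj
    refine ⟨by rw [e2]; exact hle2, fun he2 => ?_⟩
    rw [e2] at he2
    obtain ⟨hYp, hYq⟩ := heq2 he2
    rw [hpv (hYp ha0), hqv (hYq hc0), ← add_smul, hac, one_smul]
  have hsub : newtonPolygon b ⊆ S := convexHull_min hUS hconv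
  have hvS : v ∈ newtonPolygon b := by
    apply subset_convexHull
    simp only [mem_iUnion]
    exact ⟨i₀, j₀, hb, le_refl _, le_refl _⟩
  refine ⟨hvS, ?_⟩
  rintro p hp q hq ⟨a, c, ha, hc, hac, habc⟩
  obtain ⟨hp1, hp2⟩ := hsub hp
  obtain ⟨hq1, hq2⟩ := hsub hq
  have e1 : (a • p + c • q).1 = a * p.1 + c * q.1 := rfl
  have e2 : (a • p + c • q).2 = a * p.2 + c * q.2 := rfl
  have hfv : α*v.1 + β*v.2 = M := rfl
  have ef : a*(α*p.1 + β*p.2) + c*(α*q.1 + β*q.2) = M := by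
    rw [← hfv, ← habc, e1, e2]; ring
  obtain ⟨_, heq⟩ := combo_le ha.le hc.le hac hp1 hq1
  obtain ⟨hXp, hXq⟩ := heq ef
  obtain ⟨hpj, hpv⟩ := hp2 (hXp ha)
  obtain ⟨hqj, hqv⟩ := hq2 (hXq hc)
  have ej : a * p.2 + c * q.2 = (j₀:ℝ) := by
    have : (a • p + c • q).2 = v.2 := by rw [habc]
    rw [e2] at this; exact this
  obtain ⟨_, heq2⟩ := combo_le ha.le hc.le hac hpj hqj
  obtain ⟨hYp, hYq⟩ := heq2 ej
  exact hpv (hYp ha)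

lemma corner_j_bound {b : ℕ → ℕ → ℂ} {s : ℕ} {n m : ℕ → ℕ}
    (h : IsNewtonVertexData b s n m) (hs : 2 ≤ s) :
    ∀ i j : ℕ, b i j ≠ 0 → j ≤ m 1 := by
  have h1s : (1:ℕ) ∈ Set.Icc 1 s := ⟨le_refl 1, le_trans (by norm_num) hs⟩
  have h2s : (2:ℕ) ∈ Set.Icc 1 s := ⟨by norm_num, hs⟩
  have hn12 : n 1 < n 2 := h.2.1 h1s h2s (by norm_num)
  have hm21 : m 2 < m 1 := h.2.2.1 h1s h2s (by norm_num)
  have hb1 := vertex_corner h h1s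
  have hb2 := vertex_corner h h2s
  have hE1 := vertex_extreme h h1s
  have lem1a : ∀ i j : ℕ, b i j ≠ 0 → m 1 < j → i < n 1 := by
    intro i j hb hj
    by_contra hge
    push_neg at hge
    have hgr : (n 1:ℝ) ≤ (i:ℝ) := by exact_mod_cast hge
    have hjr : (m 1:ℝ) < (j:ℝ) := by exact_mod_cast hj
    exact extreme_no_seg hE1
      (mem_polygon_of_le (p := ((n 1:ℝ), (m 1:ℝ) - 1)) hb hgr (show (m 1:ℝ) - 1 ≤ (j:ℝ) by linarith))
      (mem_polygon_of_le (p := ((n 1:ℝ), (j:ℝ))) hb hgr le_rfl)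
      (mem_openSegment_vert (show (m 1:ℝ) - 1 < (m 1:ℝ) by linarith) hjr)
      (by simp [Prod.ext_iff])
  intro i j hb
  by_contra hj
  push_neg at hj
  set T : Set ℕ := {j | m 1 < j ∧ ∃ i, b i j ≠ 0} with hT
  have hTne : T.Nonempty := ⟨j, hj, i, hb⟩
  by_cases hbdd : BddAbove T
  · set J := sSup T with hJdef
    have hJT : J ∈ T := Nat.sSup_mem hTne hbdd
    obtain ⟨hJm, iJ, hbJ⟩ := hJT
    set K : Set ℕ := {i | b i J ≠ 0} with hK
    have hKne : K.Nonempty := ⟨iJ, hbJ⟩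
    set I₀ : ℕ := n 1 + (n 2 - n 1) * m 1 with hI₀
    have hKbdd : BddAbove K := ⟨I₀, fun i' hi' => corner_i_bound h hs i' J hi'⟩
    set i₀ := sSup K with hi₀def
    have hi₀K : i₀ ∈ K := Nat.sSup_mem hKne hKbdd
    have hα : (0:ℝ) < 1/((I₀:ℝ)+1) := by positivity
    have hjJ : ∀ i' j' : ℕ, b i' j' ≠ 0 → j' ≤ J := by
      intro i' j' hb'
      rcases le_or_gt j' (m 1) with h' | h'
      · exact le_trans h' hJm.le
      · exact le_csSup hbdd ⟨h', i', hb'⟩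
    have hmax : ∀ i' j' : ℕ, b i' j' ≠ 0 →
        (1/((I₀:ℝ)+1))*i' + 1*j' ≤ (1/((I₀:ℝ)+1))*i₀ + 1*J := by
      intro i' j' hb'
      have hji : j' ≤ J := hjJ i' j' hb'
      have hiI : i' ≤ I₀ := corner_i_bound h hs i' j' hb'
      have hiIr : (i':ℝ) ≤ (I₀:ℝ) := by exact_mod_cast hiI
      have hfrac : (1/((I₀:ℝ)+1))*i' < 1 := by
        rw [div_mul_eq_mul_div, one_mul, div_lt_one (by positivity)]
        linarith
      rcases eq_or_lt_of_le hji with he | hlt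
      · subst he
        have : i' ≤ i₀ := le_csSup hKbdd hb'
        have : (i':ℝ) ≤ (i₀:ℝ) := by exact_mod_cast this
        nlinarith
      · have : (j':ℝ) ≤ (J:ℝ) - 1 := by
          have : j' + 1 ≤ J := hlt
          have := (Nat.cast_le (α := ℝ)).2 this
          push_cast at this; linarith
        have h0 : (0:ℝ) ≤ (1/((I₀:ℝ)+1))*i₀ := by positivity
        nlinarith
    have hlex : ∀ i' j' : ℕ, b i' j' ≠ 0 →
        (1/((I₀:ℝ)+1))*i' + 1*j' = (1/((I₀:ℝ)+1))*i₀ + 1*J →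
        (j':ℝ) ≤ (J:ℝ) ∧ ((j':ℝ) = (J:ℝ) → (i':ℝ) = (i₀:ℝ)) := by
      intro i' j' hb' he
      refine ⟨by exact_mod_cast hjJ i' j' hb', fun hjj => ?_⟩
      have : (1/((I₀:ℝ)+1))*i' = (1/((I₀:ℝ)+1))*i₀ := by rw [hjj] at he; linarith
      have := mul_left_cancel₀ (by positivity : (1/((I₀:ℝ)+1)) ≠ 0) this
      exact this
    have hext := extreme_of_lexmax b (1/((I₀:ℝ)+1)) 1 hα one_pos i₀ J hi₀K hmax hlex
    rw [h.2.2.2] at hext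
    obtain ⟨k, hk, hke⟩ := hext
    have hmk : (m k : ℝ) = (J : ℝ) := congrArg Prod.snd hke
    have hmkJ : m k = J := by exact_mod_cast hmk
    have hmk1 : m k ≤ m 1 := by
      rcases eq_or_lt_of_le hk.1 with h' | h'
      · rw [← h']
      · exact (h.2.2.1 h1s hk h').le
    omega
  · rw [not_bddAbove_iff] at hbdd
    obtain ⟨j₀, hj₀T, hj₀big⟩ := hbdd (m 1 + n 1 * m 1)
    obtain ⟨hj₀m, i₀, hb₀⟩ := hj₀T
    have hi₀n1 : i₀ < n 1 := lem1a i₀ j₀ hb₀ hj₀m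
    have hi₀r : (i₀:ℝ) < (n 1:ℝ) := by exact_mod_cast hi₀n1
    have hn12r : (n 1:ℝ) < (n 2:ℝ) := by exact_mod_cast hn12
    have hm21r : (m 2:ℝ) < (m 1:ℝ) := by exact_mod_cast hm21
    have hj₀r : (m 1:ℝ) + (n 1:ℝ)*(m 1:ℝ) < (j₀:ℝ) := by
      have := (Nat.cast_lt (α := ℝ)).2 hj₀big; push_cast at this; linarith
    have hj₀m1 : (m 1:ℝ) < (j₀:ℝ) := by
      have h0 : (0:ℝ) ≤ (n 1:ℝ)*(m 1:ℝ) := by positivity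
      linarith
    have hpos : (0:ℝ) < (n 2:ℝ) - (i₀:ℝ) := by linarith
    set t := ((n 1:ℝ) - i₀)/((n 2:ℝ) - i₀) with hts
    have ht0 : 0 < t := div_pos (by linarith) hpos
    have ht1 : t < 1 := (div_lt_one hpos).2 (by linarith)
    have htmul : t * ((n 2:ℝ) - i₀) = (n 1:ℝ) - i₀ := div_mul_cancel₀ _ hpos.ne'
    set a : ℝ×ℝ := (1 - t) • (((i₀:ℝ), (j₀:ℝ)) : ℝ×ℝ) + t • (((n 2:ℝ), (m 2:ℝ)) : ℝ×ℝ)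
      with has
    have ha1 : a.1 = (n 1:ℝ) := by
      have e : a.1 = (1-t)*(i₀:ℝ) + t*(n 2:ℝ) := rfl
      rw [e]; nlinarith [htmul]
    have ha2 : a.2 = (1-t)*(j₀:ℝ) + t*(m 2:ℝ) := rfl
    have key : ((n 1:ℝ) - i₀)*((m 1:ℝ) - m 2) ≤ ((n 2:ℝ) - n 1)*((j₀:ℝ) - m 1) := by
      have e1 : ((n 1:ℝ) - i₀) ≤ (n 1:ℝ) := by
        have : (0:ℝ) ≤ (i₀:ℝ) := Nat.cast_nonneg _
        linarith
      have e2 : ((m 1:ℝ) - m 2) ≤ (m 1:ℝ) := by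
        have : (0:ℝ) ≤ (m 2:ℝ) := Nat.cast_nonneg _
        linarith
      have e3 : ((n 1:ℝ) - i₀)*((m 1:ℝ) - m 2) ≤ (n 1:ℝ)*(m 1:ℝ) :=
        mul_le_mul e1 e2 (by linarith) (Nat.cast_nonneg _)
      have e4 : (1:ℝ) ≤ (n 2:ℝ) - n 1 := by
        have : n 1 + 1 ≤ n 2 := hn12
        have := (Nat.cast_le (α := ℝ)).2 this
        push_cast at this; linarith
      have e5 : ((j₀:ℝ) - m 1) ≤ ((n 2:ℝ) - n 1)*((j₀:ℝ) - m 1) :=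
        le_mul_of_one_le_left (by linarith) e4
      linarith
    have expand : ((1-t)*(j₀:ℝ) + t*(m 2:ℝ) - (m 1:ℝ)) * ((n 2:ℝ) - i₀)
        = ((n 2:ℝ) - n 1)*((j₀:ℝ) - m 1) - ((n 1:ℝ) - i₀)*((m 1:ℝ) - m 2) := by
      linear_combination ((m 2:ℝ) - (j₀:ℝ)) * htmul
    have hprod : 0 ≤ ((1-t)*(j₀:ℝ) + t*(m 2:ℝ) - (m 1:ℝ)) * ((n 2:ℝ) - i₀) := by
      rw [expand]; linarith
    have ha2m : (m 1:ℝ) ≤ a.2 := by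
      rw [ha2]
      have := (mul_nonneg_iff_of_pos_right hpos).1 hprod
      linarith
    have hseg0 : a ∈ openSegment ℝ (((i₀:ℝ), (j₀:ℝ)) : ℝ×ℝ) (((n 2:ℝ), (m 2:ℝ)) : ℝ×ℝ) :=
      mem_openSegment_of ht0 ht1 rfl
    rcases eq_or_lt_of_le ha2m with heq | hlt
    · have hav1 : a = ((n 1:ℝ), (m 1:ℝ)) := Prod.ext ha1 heq.symm
      rw [hav1] at hseg0
      exact extreme_no_seg hE1
        (mem_polygon_of_le (p := ((i₀:ℝ), (j₀:ℝ))) hb₀ le_rfl le_rfl)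
        (mem_polygon_of_le (p := ((n 2:ℝ), (m 2:ℝ))) hb2 le_rfl le_rfl)
        hseg0
        (by simp [Prod.ext_iff]; intro h'; exact absurd h' (by omega))
    · have haP : a ∈ newtonPolygon b := by
        apply (convex_newtonPolygon b).segment_subset
          (mem_polygon_of_le (p := ((i₀:ℝ), (j₀:ℝ))) hb₀ le_rfl le_rfl)
          (mem_polygon_of_le (p := ((n 2:ℝ), (m 2:ℝ))) hb2 le_rfl le_rfl)
        exact ⟨1 - t, t, by linarith, ht0.le, by ring, rfl⟩
      have hane : a = ((n 1:ℝ), a.2) := Prod.ext ha1 rfl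
      exact extreme_no_seg hE1
        (mem_polygon_of_le (p := ((n 1:ℝ), (m 1:ℝ) - 1)) hb1 le_rfl (show (m 1:ℝ) - 1 ≤ (m 1:ℝ) by linarith))
        (hane ▸ haP)
        (mem_openSegment_vert (show (m 1:ℝ) - 1 < (m 1:ℝ) by linarith) hlt)
        (by simp [Prod.ext_iff])

lemma corner_edge_bound {b : ℕ → ℕ → ℂ} {s : ℕ} {n m : ℕ → ℕ}
    (h : IsNewtonVertexData b s n m) (hs : 2 ≤ s) {l₁ : ℝ}
    (hl : l₁ = ((n 2 : ℝ) - (n 1 : ℝ)) / ((m 1 : ℝ) - (m 2 : ℝ))) :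
    ∀ i j : ℕ, b i j ≠ 0 → (i:ℝ) + l₁*(j:ℝ) ≤ (n 1:ℝ) + l₁*(m 1:ℝ) := by
  classical
  have h1s : (1:ℕ) ∈ Set.Icc 1 s := ⟨le_refl 1, le_trans (by norm_num) hs⟩
  have h2s : (2:ℕ) ∈ Set.Icc 1 s := ⟨by norm_num, hs⟩
  have hn12 : n 1 < n 2 := h.2.1 h1s h2s (by norm_num)
  have hm21 : m 2 < m 1 := h.2.2.1 h1s h2s (by norm_num)
  have hn12r : (n 1:ℝ) < (n 2:ℝ) := by exact_mod_cast hn12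
  have hm21r : (m 2:ℝ) < (m 1:ℝ) := by exact_mod_cast hm21
  have hb1 := vertex_corner h h1s
  have hb2 := vertex_corner h h2s
  have hl₁pos : 0 < l₁ := by rw [hl]; exact div_pos (by linarith) (by linarith)
  have hc2 : (n 2:ℝ) + l₁*(m 2:ℝ) = (n 1:ℝ) + l₁*(m 1:ℝ) := by
    have hne : (m 1:ℝ) - (m 2:ℝ) ≠ 0 := by linarith
    rw [hl]; field_simp; ring
  by_contra hbad
  push_neg at hbad
  obtain ⟨i₁, j₁, hb₁, hgt₁⟩ := hbad
  set I₀ : ℕ := n 1 + (n 2 - n 1) * m 1 with hI₀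
  set F : Finset (ℕ × ℕ) :=
    (Finset.range (I₀+1) ×ˢ Finset.range (m 1+1)).filter (fun p => b p.1 p.2 ≠ 0) with hF
  have hmemF : ∀ i j : ℕ, b i j ≠ 0 → (i, j) ∈ F := by
    intro i j hbij
    simp only [hF, Finset.mem_filter, Finset.mem_product, Finset.mem_range, Nat.lt_succ_iff]
    exact ⟨⟨corner_i_bound h hs i j hbij, corner_j_bound h hs i j hbij⟩, hbij⟩
  obtain ⟨p, hpF, hpmax⟩ :=
    F.exists_max_image (fun p => (p.1:ℝ) + l₁*p.2) ⟨(i₁, j₁), hmemF _ _ hb₁⟩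
  set M : ℝ := (p.1:ℝ) + l₁*p.2 with hM
  set F' : Finset (ℕ × ℕ) := F.filter (fun q => (q.1:ℝ) + l₁*q.2 = M) with hF'
  obtain ⟨v, hvF', hvmax⟩ := F'.exists_max_image (fun q => q.2)
    ⟨p, by simp [hF', hpF, hM]⟩
  have hvF : v ∈ F := (Finset.mem_filter.1 hvF').1
  have hvM : (v.1:ℝ) + l₁*v.2 = M := (Finset.mem_filter.1 hvF').2
  have hbv : b v.1 v.2 ≠ 0 := (Finset.mem_filter.1 hvF).2
  have hMgt : (n 1:ℝ) + l₁*(m 1:ℝ) < M :=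
    lt_of_lt_of_le hgt₁ (hpmax (i₁, j₁) (hmemF _ _ hb₁))
  have hmax' : ∀ i j : ℕ, b i j ≠ 0 → 1*(i:ℝ) + l₁*(j:ℝ) ≤ 1*(v.1:ℝ) + l₁*(v.2:ℝ) := by
    intro i j hbij
    have := hpmax (i, j) (hmemF _ _ hbij)
    simpa [hvM] using this
  have hlex' : ∀ i j : ℕ, b i j ≠ 0 → 1*(i:ℝ) + l₁*(j:ℝ) = 1*(v.1:ℝ) + l₁*(v.2:ℝ) →
      (j:ℝ) ≤ (v.2:ℝ) ∧ ((j:ℝ) = (v.2:ℝ) → (i:ℝ) = (v.1:ℝ)) := by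
    intro i j hbij he
    rw [one_mul, one_mul] at he
    rw [hvM] at he
    have hijF' : (i, j) ∈ F' := Finset.mem_filter.2 ⟨hmemF _ _ hbij, he⟩
    have hj2 : j ≤ v.2 := hvmax (i, j) hijF'
    refine ⟨by exact_mod_cast hj2, fun hjv => ?_⟩
    rw [hjv] at he
    linarith [hvM]
  have hext := extreme_of_lexmax b 1 l₁ one_pos hl₁pos v.1 v.2 hbv hmax' hlex'
  rw [h.2.2.2] at hext
  obtain ⟨k, hk, hke⟩ := hext
  have hke1 : (n k:ℝ) = (v.1:ℝ) := congrArg Prod.fst hke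
  have hke2 : (m k:ℝ) = (v.2:ℝ) := congrArg Prod.snd hke
  have hMk : (n k:ℝ) + l₁*(m k:ℝ) = M := by rw [hke1, hke2]; exact hvM
  have hk1 : 1 ≤ k := hk.1
  rcases (show k = 1 ∨ k = 2 ∨ 2 < k by omega) with rfl | rfl | hk2
  · linarith
  · linarith
  · have hn2k : n 2 < n k := h.2.1 h2s hk hk2
    have hmk2 : m k < m 2 := h.2.2.1 h2s hk hk2
    have hn2kr : (n 2:ℝ) < (n k:ℝ) := by exact_mod_cast hn2k
    have hmk2r : (m k:ℝ) < (m 2:ℝ) := by exact_mod_cast hmk2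
    have hpos : (0:ℝ) < (m 1:ℝ) - (m k:ℝ) := by linarith
    set t := ((m 1:ℝ) - m 2)/((m 1:ℝ) - m k) with hts
    have ht0 : 0 < t := div_pos (by linarith) hpos
    have ht1 : t < 1 := (div_lt_one hpos).2 (by linarith)
    have htmul : t * ((m 1:ℝ) - m k) = (m 1:ℝ) - m 2 := div_mul_cancel₀ _ hpos.ne'
    set a : ℝ×ℝ := (1 - t) • (((n 1:ℝ), (m 1:ℝ)) : ℝ×ℝ) + t • (((n k:ℝ), (m k:ℝ)) : ℝ×ℝ)
      with has
    have ha2 : a.2 = (m 2:ℝ) := by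
      have e : a.2 = (1-t)*(m 1:ℝ) + t*(m k:ℝ) := rfl
      rw [e]; linarith [htmul]
    have ea1 : a.1 = (1-t)*(n 1:ℝ) + t*(n k:ℝ) := rfl
    have ephi : a.1 + l₁*(m 2:ℝ)
        = (1-t)*((n 1:ℝ) + l₁*(m 1:ℝ)) + t*((n k:ℝ) + l₁*(m k:ℝ)) := by
      rw [ea1]; linear_combination l₁ * htmul
    have ha1gt : (n 2:ℝ) < a.1 := by
      rw [hMk] at ephi
      have hmp : 0 < t*(M - ((n 1:ℝ) + l₁*(m 1:ℝ))) := mul_pos ht0 (by linarith)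
      have e : (1-t)*((n 1:ℝ) + l₁*(m 1:ℝ)) + t*M - ((n 1:ℝ) + l₁*(m 1:ℝ))
          = t*(M - ((n 1:ℝ) + l₁*(m 1:ℝ))) := by ring
      linarith [ephi, hc2]
    have haP : a ∈ newtonPolygon b := by
      apply (convex_newtonPolygon b).segment_subset
        (mem_polygon_of_le (p := ((n 1:ℝ), (m 1:ℝ))) hb1 le_rfl le_rfl)
        (mem_polygon_of_le (p := ((n k:ℝ), (m k:ℝ))) (vertex_corner h hk) le_rfl le_rfl)
      exact ⟨1 - t, t, by linarith, ht0.le, by ring, rfl⟩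
    have hane : a = (a.1, (m 2:ℝ)) := Prod.ext rfl ha2
    exact extreme_no_seg (vertex_extreme h h2s)
      (mem_polygon_of_le (p := ((n 2:ℝ) - 1, (m 2:ℝ))) hb2
        (show (n 2:ℝ) - 1 ≤ (n 2:ℝ) by linarith) le_rfl)
      (hane ▸ haP)
      (mem_openSegment_horiz (show (n 2:ℝ) - 1 < (n 2:ℝ) by linarith) ha1gt)
      (by simp [Prod.ext_iff])

/-- Case 2 interval of weights: with `(γ,d) = (n 1, m 1)`, `δ > d`, `γ > 0` and `δ ≤ T₁`,
the set `I_f = { l > 0 : γ + l d ≥ i + l j and γ + l d ≥ l δ for all (i,j) with b_{ij} ≠ 0 }`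
equals the closed interval `[ max_{j < d, b_{ij} ≠ 0} (i − γ)/(d − j), α₀ ]` with
`α₀ = γ/(δ − d)`, and its minimum is `l₁ = (n₂ − n₁)/(m₁ − m₂)`. -/
theorem stmt8 (b : ℕ → ℕ → ℂ) (s : ℕ) (n m : ℕ → ℕ)
    (h : IsNewtonVertexData b s n m) (hs : 2 ≤ s)
    (δ : ℕ) (hδ : 2 ≤ δ) (hd : m 1 < δ) (hγ : 0 < n 1)
    (l₁ α₀ : ℝ)
    (hl : l₁ = ((n 2 : ℝ) - (n 1 : ℝ)) / ((m 1 : ℝ) - (m 2 : ℝ)))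
    (hα : α₀ = (n 1 : ℝ) / ((δ : ℝ) - (m 1 : ℝ)))
    (hδT : (δ : ℝ) ≤ (m 1 : ℝ) + (n 1 : ℝ) / l₁) :
    {l : ℝ | 0 < l ∧ ∀ i j : ℕ, b i j ≠ 0 →
        (i : ℝ) + l * (j : ℝ) ≤ (n 1 : ℝ) + l * (m 1 : ℝ) ∧
        l * (δ : ℝ) ≤ (n 1 : ℝ) + l * (m 1 : ℝ)} =
      Set.Icc
        (sSup {x : ℝ | ∃ i j : ℕ, b i j ≠ 0 ∧ j < m 1 ∧
          x = ((i : ℝ) - (n 1 : ℝ)) / ((m 1 : ℝ) - (j : ℝ))}) α₀ ∧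
    sSup {x : ℝ | ∃ i j : ℕ, b i j ≠ 0 ∧ j < m 1 ∧
        x = ((i : ℝ) - (n 1 : ℝ)) / ((m 1 : ℝ) - (j : ℝ))} = l₁ := by
  have h1s : (1:ℕ) ∈ Set.Icc 1 s := ⟨le_refl 1, le_trans (by norm_num) hs⟩
  have h2s : (2:ℕ) ∈ Set.Icc 1 s := ⟨by norm_num, hs⟩
  have hn12 : n 1 < n 2 := h.2.1 h1s h2s (by norm_num)
  have hm21 : m 2 < m 1 := h.2.2.1 h1s h2s (by norm_num)
  have hn12r : (n 1:ℝ) < (n 2:ℝ) := by exact_mod_cast hn12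
  have hm21r : (m 2:ℝ) < (m 1:ℝ) := by exact_mod_cast hm21
  have hb1 := vertex_corner h h1s
  have hb2 := vertex_corner h h2s
  have hl₁pos : 0 < l₁ := by rw [hl]; exact div_pos (by linarith) (by linarith)
  set S := {x : ℝ | ∃ i j : ℕ, b i j ≠ 0 ∧ j < m 1 ∧
      x = ((i : ℝ) - (n 1 : ℝ)) / ((m 1 : ℝ) - (j : ℝ))} with hSdef
  have hedge := corner_edge_bound h hs hl
  have hjb := corner_j_bound h hs
  have hub : ∀ x ∈ S, x ≤ l₁ := by
    rintro x ⟨i, j, hbij, hjm, rfl⟩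
    have hjmr : (j:ℝ) < (m 1:ℝ) := by exact_mod_cast hjm
    have hdpos : (0:ℝ) < (m 1:ℝ) - j := by linarith
    rw [div_le_iff₀ hdpos]
    have h1 := hedge i j hbij
    have e : l₁*((m 1:ℝ) - j) = l₁*(m 1:ℝ) - l₁*(j:ℝ) := by ring
    linarith
  have hl₁S : l₁ ∈ S := ⟨n 2, m 2, hb2, hm21, hl⟩
  have hSbdd : BddAbove S := ⟨l₁, hub⟩
  have hSne : S.Nonempty := ⟨l₁, hl₁S⟩
  have hsup : sSup S = l₁ := le_antisymm (csSup_le hSne hub) (le_csSup hSbdd hl₁S)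
  have hδr : (m 1:ℝ) < (δ:ℝ) := by exact_mod_cast hd
  constructor
  · ext l
    simp only [Set.mem_setOf_eq, Set.mem_Icc]
    constructor
    · rintro ⟨hl0, hall⟩
      constructor
      · rw [hsup]
        have h2 := (hall (n 2) (m 2) hb2).1
        rw [hl, div_le_iff₀ (show (0:ℝ) < (m 1:ℝ) - (m 2:ℝ) by linarith)]
        have e : l*((m 1:ℝ) - (m 2:ℝ)) = l*(m 1:ℝ) - l*(m 2:ℝ) := by ring
        linarith
      · have h1 := (hall (n 1) (m 1) hb1).2
        rw [hα, le_div_iff₀ (show (0:ℝ) < (δ:ℝ) - (m 1:ℝ) by linarith)]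
        have e : l*((δ:ℝ) - (m 1:ℝ)) = l*(δ:ℝ) - l*(m 1:ℝ) := by ring
        linarith
    · rintro ⟨hge, hle⟩
      rw [hsup] at hge
      have hl0 : 0 < l := lt_of_lt_of_le hl₁pos hge
      refine ⟨hl0, fun i j hbij => ?_⟩
      constructor
      · have hjm := hjb i j hbij
        rcases eq_or_lt_of_le hjm with heq | hlt
        · have h1 := hedge i j hbij
          have hjr : (j:ℝ) = (m 1:ℝ) := by exact_mod_cast heq
          rw [hjr] at h1 ⊢
          linarith
        · have hx : ((i:ℝ) - (n 1:ℝ))/((m 1:ℝ) - (j:ℝ)) ∈ S := ⟨i, j, hbij, hlt, rfl⟩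
          have hxl := le_csSup hSbdd hx
          rw [hsup] at hxl
          have hxl2 : ((i:ℝ) - (n 1:ℝ))/((m 1:ℝ) - (j:ℝ)) ≤ l := hxl.trans hge
          have hjr : (j:ℝ) < (m 1:ℝ) := by exact_mod_cast hlt
          rw [div_le_iff₀ (show (0:ℝ) < (m 1:ℝ) - (j:ℝ) by linarith)] at hxl2
          have e : l*((m 1:ℝ) - (j:ℝ)) = l*(m 1:ℝ) - l*(j:ℝ) := by ring
          linarith
      · rw [hα, le_div_iff₀ (show (0:ℝ) < (δ:ℝ) - (m 1:ℝ) by linarith)] at hle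
        have e : l*((δ:ℝ) - (m 1:ℝ)) = l*(δ:ℝ) - l*(m 1:ℝ) := by ring
        linarith
  · exact hsup
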